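/- Let κ be a field of characteristic 0 or of characteristic p > r, let (H^r_s, ∇^r_s) be a free module with integrable connection over O^r = O_{S_κ,s}/𝔪_s^{r+1} as above, and let F^{r,i} ⊆ H^r_s be a submodule preserved by the connection, i.e. ∇^r_s(∂/∂x_j)(F^{r,i}) ⊆ F^{r,i} for all j, which surjects onto its image in the fibre H_s = H^r_s/𝔪_s H^r_s. Then every ∇^r_s-flat section b of H^r_s whose fibre b_s at s lies inside the image F^i_s of F^{r,i} in H_s in fact lies inside F^{r,i}. -/

import Mathlib

/-!
Statement 11 (the flat-sections-respect-the-conjugate-filtration step in the proof of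
Lemma `factorthroughlem`).

Let `κ` be a field of characteristic `0` or of characteristic `p > r`, let
`(H^r_s, ∇^r_s)` be a free module with integrable connection over
`O^r = O_{S_κ,s}/𝔪_s^{r+1}` as above, and let `F^{r,i} ⊆ H^r_s` be a submodule
preserved by the connection (i.e. `∇^r_s(∂/∂x_j)(F^{r,i}) ⊆ F^{r,i}` for all `j`) which
surjects onto its image in the fibre `H_s = H^r_s/𝔪_s H^r_s` (automatic).  Then every
`∇^r_s`-flat section `b` of `H^r_s` whose fibre `b_s` lies in the image `F^i_s` of
`F^{r,i}` in `H_s` in fact lies inside `F^{r,i}`.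

(Membership of the fibre `b_s` in `F^i_s` is expressed as `b ∈ F^{r,i} + 𝔪_s H^r_s`.)
-/

open Set

/-- The order-`r` truncated local ring `O^r = O_{S_κ,s}/𝔪_s^{r+1}` of a smooth variety
at a point with local coordinates, together with a free module with integrable
connection over it. -/
structure TruncatedConn where
  /-- the base field -/
  κ : Type*
  [fieldκ : Field κ]
  /-- the infinitesimal order -/
  r : ℕ
  /-- the number of local coordinates -/
  n : ℕ
  /-- the rank of `H^r_s` -/
  m : ℕ
  /-- `char κ = 0` or `char κ = p > r` -/
  charOK : CharZero κ ∨ ∃ p : ℕ, CharP κ p ∧ r < p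
  /-- `A = O^r = O_{S_κ,s}/𝔪_s^{r+1}` -/
  A : Type*
  [ringA : CommRing A]
  [algA : Algebra κ A]
  /-- the local coordinates `x_1, …, x_n` at `s` -/
  x : Fin n → A
  /-- `𝔪_s^{r+1} = 0` in `A` -/
  trunc : (Ideal.span (Set.range x)) ^ (r + 1) = ⊥
  /-- `A` is local with maximal ideal `𝔪_s = (x_1, …, x_n)` -/
  isLocal : ∀ a : A, IsUnit a ∨ a ∈ Ideal.span (Set.range x)
  /-- the derivations `∂/∂x_i` -/
  der : Fin n → Derivation κ A A
  der_x : ∀ i j, der i (x j) = if i = j then 1 else 0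
  /-- the free module `H^r_s` -/
  H : Type*
  [addH : AddCommGroup H]
  [modH : Module A H]
  [modκH : Module κ H]
  [towerH : IsScalarTower κ A H]
  basisH : Module.Basis (Fin m) A H
  /-- the connection `∇^r_s`, via the covariant derivatives `∇^r_s(∂/∂x_i)` -/
  nab : Fin n → (H →ₗ[κ] H)
  /-- the Leibniz rule -/
  leibniz : ∀ (i : Fin n) (a : A) (v : H), nab i (a • v) = der i a • v + a • nab i v
  /-- integrability: the covariant derivatives commute -/
  integrable : ∀ (i j : Fin n) (v : H), nab i (nab j v) = nab j (nab i v)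

attribute [instance] TruncatedConn.fieldκ TruncatedConn.ringA TruncatedConn.algA
  TruncatedConn.addH TruncatedConn.modH TruncatedConn.modκH TruncatedConn.towerH

namespace TruncatedConn

variable (C : TruncatedConn)

/-- the maximal ideal `𝔪_s ⊆ O^r` -/
def mIdeal : Ideal C.A := Ideal.span (Set.range C.x)

/-- The "Euler operator" `∑ⱼ xⱼ ∂ⱼ` on `A`. -/
def EA (a : C.A) : C.A := ∑ j, C.x j * C.der j a

lemma EA_add (a b : C.A) : C.EA (a + b) = C.EA a + C.EA b := by
  simp [EA, mul_add, Finset.sum_add_distrib]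

lemma EA_mul (a b : C.A) : C.EA (a * b) = C.EA a * b + a * C.EA b := by
  simp only [EA, Finset.sum_mul, Finset.mul_sum, ← Finset.sum_add_distrib]
  refine Finset.sum_congr rfl fun j _ => ?_
  rw [Derivation.leibniz, smul_eq_mul, smul_eq_mul]
  ring

lemma EA_mem (a : C.A) : C.EA a ∈ C.mIdeal := by
  refine Submodule.sum_mem _ fun j _ => Ideal.mul_mem_right _ _ ?_
  exact Ideal.subset_span ⟨j, rfl⟩

lemma EA_x (i : Fin C.n) : C.EA (C.x i) = C.x i := by
  simp only [EA, der_x]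
  rw [Finset.sum_eq_single i]
  · simp
  · intro j _ hj; simp [hj]
  · simp

/-- For `a ∈ 𝔪`, `EA a ≡ a mod 𝔪²`. -/
lemma EA_sub_mem_sq : ∀ a ∈ C.mIdeal, C.EA a - a ∈ C.mIdeal ^ 2 := by
  intro a ha
  induction ha using Submodule.span_induction with
  | mem y hy =>
    obtain ⟨i, rfl⟩ := hy
    rw [C.EA_x i, sub_self]
    exact zero_mem _
  | zero =>
    have : C.EA 0 = 0 := by simp [EA]
    rw [this, sub_zero]
    exact zero_mem _
  | add y z hy hz hpy hpz =>
    rw [C.EA_add]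
    have : C.EA y + C.EA z - (y + z) = (C.EA y - y) + (C.EA z - z) := by ring
    rw [this]
    exact add_mem hpy hpz
  | smul c y hy hpy =>
    have key : C.EA (c * y) - c * y = (C.EA c) * y + c * (C.EA y - y) := by
      rw [C.EA_mul]; ring
    rw [smul_eq_mul, key]
    refine add_mem ?_ ?_
    · rw [pow_two]
      exact Ideal.mul_mem_mul (C.EA_mem c) hy
    · exact Ideal.mul_mem_left _ _ hpy

/-- For `a ∈ 𝔪^k`, `EA a ≡ k·a mod 𝔪^(k+1)`. -/
lemma EA_pow_sub_mem : ∀ k : ℕ, ∀ a ∈ C.mIdeal ^ k,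
    C.EA a - (k : C.A) * a ∈ C.mIdeal ^ (k + 1) := by
  intro k
  induction k with
  | zero =>
    intro a _
    rw [Nat.cast_zero, zero_mul, sub_zero, pow_one]
    exact C.EA_mem a
  | succ k ih =>
    intro a ha
    rw [pow_succ] at ha
    refine Submodule.mul_induction_on ha (fun u hu v hv => ?_) (fun x y hx hy => ?_)
    ·
      have key : C.EA (u * v) - ((k + 1 : ℕ) : C.A) * (u * v) =
          (C.EA u - (k : C.A) * u) * v + u * (C.EA v - v) := by
        rw [C.EA_mul]; push_cast; ring
      rw [key]
      refine add_mem ?_ ?_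
      · rw [pow_succ]
        exact Ideal.mul_mem_mul (ih u hu) hv
      · have : C.mIdeal ^ (k + 1 + 1) = C.mIdeal ^ k * C.mIdeal ^ 2 := by
          rw [← pow_add]
        rw [this]
        exact Ideal.mul_mem_mul hu (C.EA_sub_mem_sq v hv)
    · have key : C.EA (x + y) - ((k + 1 : ℕ) : C.A) * (x + y) =
          (C.EA x - ((k + 1 : ℕ) : C.A) * x) + (C.EA y - ((k + 1 : ℕ) : C.A) * y) := by
        rw [C.EA_add]; ring
      rw [key]
      exact add_mem hx hy

/-- The Euler operator `∑ⱼ xⱼ • ∇ⱼ` on `H`. -/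
def EH (v : C.H) : C.H := ∑ j, C.x j • C.nab j v

lemma EH_add (v w : C.H) : C.EH (v + w) = C.EH v + C.EH w := by
  simp [EH, smul_add, Finset.sum_add_distrib]

lemma EH_smul (a : C.A) (v : C.H) : C.EH (a • v) = C.EA a • v + a • C.EH v := by
  unfold EH EA
  rw [Finset.sum_smul, Finset.smul_sum, ← Finset.sum_add_distrib]
  refine Finset.sum_congr rfl fun j _ => ?_
  rw [C.leibniz, smul_add, mul_smul, smul_comm (C.x j) a]

/-- For `c ∈ 𝔪^k • H`, `EH c ≡ k·c mod 𝔪^(k+1) • H`. -/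
lemma EH_pow_sub_mem (k : ℕ) : ∀ c ∈ C.mIdeal ^ k • (⊤ : Submodule C.A C.H),
    C.EH c - (k : C.A) • c ∈ C.mIdeal ^ (k + 1) • (⊤ : Submodule C.A C.H) := by
  intro c hc
  refine Submodule.smul_induction_on hc (fun a ha v hv => ?_) (fun x y hpx hpy => ?_)
  ·
    have key : C.EH (a • v) - (k : C.A) • (a • v) =
        (C.EA a - (k : C.A) * a) • v + a • C.EH v := by
      rw [C.EH_smul, sub_smul, mul_smul]; abel
    rw [key]
    refine add_mem (Submodule.smul_mem_smul (C.EA_pow_sub_mem k a ha) trivial) ?_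
    rw [EH, Finset.smul_sum]
    refine Submodule.sum_mem _ fun j _ => ?_
    rw [smul_smul]
    have : a * C.x j ∈ C.mIdeal ^ (k + 1) := by
      rw [pow_succ]
      exact Ideal.mul_mem_mul ha (Ideal.subset_span ⟨j, rfl⟩)
    exact Submodule.smul_mem_smul this trivial
  · have key : C.EH (x + y) - (k : C.A) • (x + y) =
        (C.EH x - (k : C.A) • x) + (C.EH y - (k : C.A) • y) := by
      rw [C.EH_add, smul_add]; abel
    rw [key]
    exact add_mem hpx hpy

end TruncatedConn

/-- If the submodule `F ⊆ H^r_s` is preserved by the connection,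
then any flat section `b` whose fibre at `s` lies in the image of `F` in the fibre
`H_s` (i.e. `b ∈ F + 𝔪_s H^r_s`) lies in `F`. -/
theorem statement11 (C : TruncatedConn) (F : Submodule C.A C.H)
    (hF : ∀ (j : Fin C.n), ∀ v ∈ F, C.nab j v ∈ F)
    (b : C.H)
    (hbflat : ∀ j : Fin C.n, C.nab j b = 0)
    (hbs : b ∈ F ⊔ (C.mIdeal • (⊤ : Submodule C.A C.H))) :
    b ∈ F := by
  -- the natural numbers `1 ≤ k ≤ r` are invertible in `A`
  have hunit : ∀ k : ℕ, 1 ≤ k → k ≤ C.r → IsUnit ((k : C.A)) := by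
    intro k h1 h2
    have hκ : ((k : C.κ)) ≠ 0 := by
      rcases C.charOK with h | ⟨p, hp, hrp⟩
      · haveI := h
        exact Nat.cast_ne_zero.mpr (by omega)
      · intro h0
        have hdvd := (CharP.cast_eq_zero_iff C.κ p k).mp h0
        have := Nat.le_of_dvd (by omega) hdvd
        omega
    have h := (isUnit_iff_ne_zero.mpr hκ).map (algebraMap C.κ C.A)
    rwa [map_natCast] at h
  -- the inductive step: from `b ∈ F + 𝔪^k H` to `b ∈ F + 𝔪^(k+1) H`
  have step : ∀ k : ℕ, 1 ≤ k → k ≤ C.r →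
      b ∈ F ⊔ C.mIdeal ^ k • (⊤ : Submodule C.A C.H) →
      b ∈ F ⊔ C.mIdeal ^ (k + 1) • (⊤ : Submodule C.A C.H) := by
    intro k h1 h2 hb
    obtain ⟨f, hf, c, hc, rfl⟩ := Submodule.mem_sup.mp hb
    have hnc : ∀ j, C.nab j c ∈ F := by
      intro j
      have h0 := hbflat j
      rw [map_add] at h0
      have hcc : C.nab j c = -C.nab j f := by
        rw [eq_neg_iff_add_eq_zero, add_comm]; exact h0
      rw [hcc]
      exact neg_mem (hF j f hf)
    have hEH : C.EH c ∈ F := Submodule.sum_mem _ fun j _ => F.smul_mem _ (hnc j)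
    have hkc : (k : C.A) • c ∈ F ⊔ C.mIdeal ^ (k + 1) • (⊤ : Submodule C.A C.H) := by
      have h3 := C.EH_pow_sub_mem k c hc
      have hrw : (k : C.A) • c = C.EH c - (C.EH c - (k : C.A) • c) := by abel
      rw [hrw]
      exact sub_mem (Submodule.mem_sup_left hEH) (Submodule.mem_sup_right h3)
    obtain ⟨u, hu⟩ := hunit k h1 h2
    have hc' : c ∈ F ⊔ C.mIdeal ^ (k + 1) • (⊤ : Submodule C.A C.H) := by
      have h4 := Submodule.smul_mem _ ((↑u⁻¹ : C.A)) hkc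
      rwa [smul_smul, ← hu, Units.inv_mul, one_smul] at h4
    exact Submodule.add_mem _ (Submodule.mem_sup_left hf) hc'
  -- iterate up to `k = r + 1`
  have main : ∀ k : ℕ, 1 ≤ k → k ≤ C.r + 1 →
      b ∈ F ⊔ C.mIdeal ^ k • (⊤ : Submodule C.A C.H) := by
    intro k
    induction k with
    | zero => omega
    | succ k ih =>
      intro _ hk
      by_cases hk0 : k = 0
      · subst hk0
        rw [pow_one]
        exact hbs
      · exact step k (by omega) (by omega) (ih (by omega) (by omega))
  have hbot : C.mIdeal ^ (C.r + 1) = ⊥ := C.trunc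
  have h := main (C.r + 1) (by omega) le_rfl
  rwa [hbot, Submodule.bot_smul, sup_bot_eq] at h
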